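/- Let Wₙ = (1/n) Σᵢ₌₁ⁿ Xᵢ ψ(εᵢ). Then (i) ‖β̂‖ ≤ (1/τ)·‖Wₙ‖ (as a deterministic inequality); and (ii) if the Xᵢ are independent random vectors with mean 0 and covariance Id_p, independent of the εᵢ, then E[‖β̂‖²] ≤ (1/τ²)·(p/n)·(1/n) Σᵢ₌₁ⁿ E[ψ²(εᵢ)]. -/

import Mathlib

noncomputable section

open scoped BigOperators
open MeasureTheory ProbabilityTheory

/-- The gradient-type map `f(β) = -(1/n) Σᵢ Xᵢ ψ(εᵢ - Xᵢᵀβ) + τβ`, with `ψ = ρ'`. -/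
def fgrad {p n : ℕ} (ρ : ℝ → ℝ) (τ : ℝ) (X : Fin n → EuclideanSpace ℝ (Fin p))
    (ε : Fin n → ℝ) (β : EuclideanSpace ℝ (Fin p)) : EuclideanSpace ℝ (Fin p) :=
  τ • β - (1 / (n : ℝ)) • ∑ i, deriv ρ (ε i - ∑ k, X i k * β k) • X i

/-- `Wₙ = (1/n) Σᵢ Xᵢ ψ(εᵢ)`. -/
def Wn {p n : ℕ} (ρ : ℝ → ℝ) (X : Fin n → EuclideanSpace ℝ (Fin p))
    (ε : Fin n → ℝ) : EuclideanSpace ℝ (Fin p) :=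
  (1 / (n : ℝ)) • ∑ i, deriv ρ (ε i) • X i

lemma det_bound {p n : ℕ} (ρ : ℝ → ℝ) (τ : ℝ) (hτ : 0 < τ)
    (hρconv : ConvexOn ℝ Set.univ ρ) (hρsmooth : ContDiff ℝ 2 ρ)
    (X : Fin n → EuclideanSpace ℝ (Fin p)) (ε : Fin n → ℝ)
    (β : EuclideanSpace ℝ (Fin p)) (h : fgrad ρ τ X ε β = 0) :
    ‖β‖ ≤ (1 / τ) * ‖Wn ρ X ε‖ := by
  have hψmono : Monotone (deriv ρ) := by
    have := hρconv.monotoneOn_deriv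
      (fun x _ => (hρsmooth.differentiable (by norm_num)).differentiableAt)
    exact monotoneOn_univ.mp this
  set s : Fin n → ℝ := fun i => ∑ k, X i k * β k with hs
  have hinner : ∀ i, (inner ℝ (X i) β : ℝ) = s i := by
    intro i
    simp [PiLp.inner_apply, RCLike.inner_apply, conj_trivial, hs]
    exact Finset.sum_congr rfl fun _ _ => mul_comm _ _
  have heq : τ • β = (1 / (n : ℝ)) • ∑ i, deriv ρ (ε i - s i) • X i := by
    have := sub_eq_zero.mp h
    exact this
  have h1 : τ * ‖β‖ ^ 2 = (1 / (n : ℝ)) * ∑ i, deriv ρ (ε i - s i) * s i := by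
    have : (inner ℝ (τ • β) β : ℝ) = inner ℝ ((1 / (n : ℝ)) • ∑ i, deriv ρ (ε i - s i) • X i) β := by
      rw [heq]
    rw [real_inner_smul_left, real_inner_self_eq_norm_sq, real_inner_smul_left,
      sum_inner] at this
    simp only [real_inner_smul_left, hinner] at this
    exact this
  have h2 : (inner ℝ (Wn ρ X ε) β : ℝ) = (1 / (n : ℝ)) * ∑ i, deriv ρ (ε i) * s i := by
    rw [Wn, real_inner_smul_left, sum_inner]
    simp only [real_inner_smul_left, hinner]
  have hstep : τ * ‖β‖ ^ 2 ≤ (inner ℝ (Wn ρ X ε) β : ℝ) := by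
    rw [h1, h2]
    apply mul_le_mul_of_nonneg_left _ (by positivity)
    apply Finset.sum_le_sum
    intro i _
    rcases le_or_gt 0 (s i) with hsi | hsi
    · exact mul_le_mul_of_nonneg_right (hψmono (by linarith)) hsi
    · have : deriv ρ (ε i) ≤ deriv ρ (ε i - s i) := hψmono (by linarith)
      nlinarith
  have hcs : (inner ℝ (Wn ρ X ε) β : ℝ) ≤ ‖Wn ρ X ε‖ * ‖β‖ := real_inner_le_norm _ _
  rcases eq_or_lt_of_le (norm_nonneg β) with hβ0 | hβ0
  · rw [← hβ0]; positivity
  · have hτβ : τ * ‖β‖ ≤ ‖Wn ρ X ε‖ := by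
      have := hstep.trans hcs
      rw [pow_two] at this
      nlinarith
    rw [← le_div_iff₀' hτ] at hτβ
    calc ‖β‖ ≤ ‖Wn ρ X ε‖ / τ := hτβ
    _ = 1 / τ * ‖Wn ρ X ε‖ := by ring

theorem statement2 {p n : ℕ} {Ω : Type*} [MeasurableSpace Ω] (μ : Measure Ω)
    [IsProbabilityMeasure μ]
    (ρ : ℝ → ℝ) (τ : ℝ) (hτ : 0 < τ)
    (hρconv : ConvexOn ℝ Set.univ ρ) (hρsmooth : ContDiff ℝ 2 ρ)
    (hρnonneg : ∀ x, 0 ≤ ρ x) (hρzero : ρ 0 = 0)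
    (X : Fin n → Ω → EuclideanSpace ℝ (Fin p)) (ε : Fin n → Ω → ℝ)
    (βhat : Ω → EuclideanSpace ℝ (Fin p))
    (hβhat : ∀ ω, fgrad ρ τ (fun i => X i ω) (fun i => ε i ω) (βhat ω) = 0)
    (hXmeas : ∀ i, Measurable (X i)) (hεmeas : ∀ i, Measurable (ε i))
    -- the Xᵢ's are independent random vectors
    (hXindep : iIndepFun X μ)
    -- mean zero
    (hXmean : ∀ i k, ∫ ω, X i ω k ∂μ = 0)
    -- covariance `Id_p`
    (hXcov : ∀ i k l, ∫ ω, X i ω k * X i ω l ∂μ = if k = l then (1 : ℝ) else 0)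
    -- the Xᵢ's are independent of the εᵢ's
    (hXε : IndepFun (fun ω => fun i => X i ω) (fun ω => fun i => ε i ω) μ) :
    -- (i) the deterministic bound ‖β̂‖ ≤ (1/τ)·‖Wₙ‖
    (∀ ω, ‖βhat ω‖ ≤ (1 / τ) * ‖Wn ρ (fun i => X i ω) (fun i => ε i ω)‖) ∧
    -- (ii) E[‖β̂‖²] ≤ (1/τ²)·(p/n)·(1/n) Σᵢ E[ψ²(εᵢ)]
    ∫⁻ ω, ENNReal.ofReal (‖βhat ω‖ ^ 2) ∂μ ≤
      ENNReal.ofReal ((1 / τ ^ 2) * ((p : ℝ) / (n : ℝ)) * (1 / (n : ℝ))) *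
        ∑ i, ∫⁻ ω, ENNReal.ofReal ((deriv ρ (ε i ω)) ^ 2) ∂μ := by
  have part1 : ∀ ω, ‖βhat ω‖ ≤ (1 / τ) * ‖Wn ρ (fun i => X i ω) (fun i => ε i ω)‖ :=
    fun ω => det_bound ρ τ hτ hρconv hρsmooth _ _ _ (hβhat ω)
  refine ⟨part1, ?_⟩
  have hψcont : Continuous (deriv ρ) := hρsmooth.continuous_deriv one_le_two
  -- trivial case p = 0
  by_cases hp : p = 0
  · subst hp
    have hb : ∀ ω, ‖βhat ω‖ = 0 := fun ω => by
      rw [Subsingleton.elim (βhat ω) 0, norm_zero]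
    simp only [hb]
    simp
  -- trivial case n = 0
  by_cases hn : n = 0
  · subst hn
    have hb : ∀ ω, ‖βhat ω‖ = 0 := by
      intro ω
      have h0 := hβhat ω
      simp only [fgrad, Finset.univ_eq_empty, Finset.sum_empty, smul_zero, sub_zero] at h0
      rw [smul_eq_zero] at h0
      rcases h0 with h0 | h0
      · exact absurd h0 hτ.ne'
      · rw [h0, norm_zero]
    simp only [hb]
    simp
  -- main case
  set ψ : ℝ → ℝ := deriv ρ with hψdef
  set g : Fin n → Ω → ℝ := fun i ω => ψ (ε i ω) with hg
  have hgmeas : ∀ i, Measurable (g i) := fun i => hψcont.measurable.comp (hεmeas i)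
  have hXkmeas : ∀ i k, Measurable (fun ω => X i ω k) :=
    fun i k => (measurable_pi_apply k).comp ((WithLp.measurable_ofLp _ _).comp (hXmeas i))
  by_cases hfin : ∀ i, (∫⁻ ω, ENNReal.ofReal ((ψ (ε i ω)) ^ 2) ∂μ) ≠ ⊤
  swap
  · push_neg at hfin
    obtain ⟨i0, hi0⟩ := hfin
    have hcpos : (0:ℝ) < (1 / τ ^ 2) * ((p : ℝ) / (n : ℝ)) * (1 / (n : ℝ)) := by
      have hp' : (0:ℝ) < (p : ℝ) := by exact_mod_cast Nat.pos_of_ne_zero hp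
      have hn' : (0:ℝ) < (n : ℝ) := by exact_mod_cast Nat.pos_of_ne_zero hn
      positivity
    have hsum : (∑ i, ∫⁻ ω, ENNReal.ofReal ((deriv ρ (ε i ω)) ^ 2) ∂μ) = ⊤ :=
      ENNReal.sum_eq_top.mpr ⟨i0, Finset.mem_univ _, hi0⟩
    rw [hsum, ENNReal.mul_top (ENNReal.ofReal_pos.mpr hcpos).ne']
    exact le_top
  -- integrability of ψ(εᵢ)² and of the coordinates of Xᵢ
  have hgsqInt : ∀ i, Integrable (fun ω => g i ω ^ 2) μ := by
    intro i
    refine ⟨((hgmeas i).pow_const 2).aestronglyMeasurable, ?_⟩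
    rw [hasFiniteIntegral_iff_ofReal (Filter.Eventually.of_forall fun ω => sq_nonneg _)]
    exact lt_top_iff_ne_top.mpr (hfin i)
  have hgL2 : ∀ i, MemLp (g i) 2 μ := fun i =>
    (memLp_two_iff_integrable_sq (hgmeas i).aestronglyMeasurable).2 (hgsqInt i)
  have hXsqInt : ∀ i k, Integrable (fun ω => X i ω k * X i ω k) μ := by
    intro i k
    by_contra hcon
    have h1 := hXcov i k k
    rw [integral_undef hcon, if_pos rfl] at h1
    norm_num at h1
  have hXL2 : ∀ i k, MemLp (fun ω => X i ω k) 2 μ := by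
    intro i k
    refine (memLp_two_iff_integrable_sq (hXkmeas i k).aestronglyMeasurable).2 ?_
    simpa [pow_two] using hXsqInt i k
  -- products are integrable
  have hggInt : ∀ i j, Integrable (fun ω => g i ω * g j ω) μ := by
    intro i j
    have := ((hgL2 j).smul (hgL2 i) (p := 2) (q := 2) (r := 1))
    rw [memLp_one_iff_integrable] at this
    exact this
  have hXXInt : ∀ (i j : Fin n) (k : Fin p),
      Integrable (fun ω => X i ω k * X j ω k) μ := by
    intro i j k
    have := ((hXL2 j k).smul (hXL2 i k) (p := 2) (q := 2) (r := 1))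
    rw [memLp_one_iff_integrable] at this
    exact this
  -- independence of the g-products and X-products
  have hindepGX : ∀ (i j : Fin n) (k : Fin p),
      IndepFun (fun ω => g i ω * g j ω) (fun ω => X i ω k * X j ω k) μ := by
    intro i j k
    have hφ : Measurable (fun e : Fin n → ℝ => ψ (e i) * ψ (e j)) :=
      (hψcont.measurable.comp (measurable_pi_apply i)).mul
        (hψcont.measurable.comp (measurable_pi_apply j))
    have hχ : Measurable (fun x : Fin n → EuclideanSpace ℝ (Fin p) => x i k * x j k) :=
      by fun_prop
    exact hXε.symm.comp hφ hχ
  have htermInt : ∀ (i j : Fin n) (k : Fin p),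
      Integrable (fun ω => (g i ω * g j ω) * (X i ω k * X j ω k)) μ :=
    fun i j k => (hindepGX i j k).integrable_mul (hggInt i j) (hXXInt i j k)
  -- values of the term integrals
  have hXXval : ∀ (i j : Fin n) (k : Fin p), i ≠ j →
      ∫ ω, X i ω k * X j ω k ∂μ = 0 := by
    intro i j k hij
    have hind : IndepFun (fun ω => X i ω k) (fun ω => X j ω k) μ :=
      (hXindep.indepFun hij).comp ((measurable_pi_apply k).comp (WithLp.measurable_ofLp _ _)) ((measurable_pi_apply k).comp (WithLp.measurable_ofLp _ _))
    rw [hind.integral_fun_mul_eq_mul_integral (hXkmeas i k).aestronglyMeasurable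
      (hXkmeas j k).aestronglyMeasurable, hXmean i k, hXmean j k, mul_zero]
  have hterm : ∀ (i j : Fin n) (k : Fin p),
      ∫ ω, (g i ω * g j ω) * (X i ω k * X j ω k) ∂μ
        = if i = j then ∫ ω, g i ω ^ 2 ∂μ else 0 := by
    intro i j k
    rw [(hindepGX i j k).integral_fun_mul_eq_mul_integral ((hgmeas i).mul (hgmeas j)).aestronglyMeasurable
      ((hXkmeas i k).mul (hXkmeas j k)).aestronglyMeasurable]
    by_cases hij : i = j
    · subst hij
      rw [if_pos rfl, hXcov i k k, if_pos rfl, mul_one]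
      congr 1
      ext ω
      ring
    · rw [if_neg hij, hXXval i j k hij, mul_zero]
  -- pointwise expansion of ‖Wₙ‖²
  have hWsq : ∀ ω, ‖Wn ρ (fun i => X i ω) (fun i => ε i ω)‖ ^ 2
      = (1 / (n:ℝ))^2 * ∑ k, ∑ i, ∑ j, (g i ω * g j ω) * (X i ω k * X j ω k) := by
    intro ω
    have hWk : ∀ k, Wn ρ (fun i => X i ω) (fun i => ε i ω) k
        = (1 / (n:ℝ)) * ∑ i, g i ω * X i ω k := by
      intro k
      rw [Wn, PiLp.smul_apply, smul_eq_mul, WithLp.ofLp_sum, Finset.sum_apply k Finset.univ]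
      simp only [PiLp.smul_apply, smul_eq_mul, hg, hψdef]
    rw [← real_inner_self_eq_norm_sq]
    rw [show (inner ℝ (Wn ρ (fun i => X i ω) (fun i => ε i ω))
      (Wn ρ (fun i => X i ω) (fun i => ε i ω)) : ℝ)
        = ∑ k, Wn ρ (fun i => X i ω) (fun i => ε i ω) k
            * Wn ρ (fun i => X i ω) (fun i => ε i ω) k by
      simp only [PiLp.inner_apply, RCLike.inner_apply, conj_trivial]]
    rw [Finset.mul_sum]
    refine Finset.sum_congr rfl fun k _ => ?_
    have expand : (∑ i, g i ω * X i ω k) * (∑ j, g j ω * X j ω k)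
        = ∑ i, ∑ j, (g i ω * g j ω) * (X i ω k * X j ω k) := by
      rw [Finset.sum_mul_sum]
      exact Finset.sum_congr rfl fun i _ => Finset.sum_congr rfl fun j _ => by ring
    rw [hWk k, show ((1 / (n:ℝ)) * ∑ i, g i ω * X i ω k)
          * ((1 / (n:ℝ)) * ∑ i, g i ω * X i ω k)
        = (1 / (n:ℝ))^2 * ((∑ i, g i ω * X i ω k) * (∑ j, g j ω * X j ω k)) by ring,
      expand]
  -- integrability of ‖Wₙ‖²
  have hWInt : Integrable (fun ω => ‖Wn ρ (fun i => X i ω) (fun i => ε i ω)‖ ^ 2) μ := by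
    rw [funext hWsq]
    exact ((integrable_finset_sum _ fun k _ => integrable_finset_sum _ fun i _ =>
      integrable_finset_sum _ fun j _ => htermInt i j k)).const_mul _
  -- value of ∫ ‖Wₙ‖²
  have hWval : ∫ ω, ‖Wn ρ (fun i => X i ω) (fun i => ε i ω)‖ ^ 2 ∂μ
      = (1 / (n:ℝ))^2 * ((p : ℝ) * ∑ i, ∫ ω, g i ω ^ 2 ∂μ) := by
    rw [funext hWsq, integral_const_mul]
    congr 1
    rw [integral_finset_sum _ fun k _ => integrable_finset_sum _ fun i _ =>
      integrable_finset_sum _ fun j _ => htermInt i j k]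
    have : ∀ k : Fin p, ∫ ω, ∑ i, ∑ j, (g i ω * g j ω) * (X i ω k * X j ω k) ∂μ
        = ∑ i, ∫ ω, g i ω ^ 2 ∂μ := by
      intro k
      rw [integral_finset_sum _ fun i _ => integrable_finset_sum _ fun j _ => htermInt i j k]
      refine Finset.sum_congr rfl fun i _ => ?_
      rw [integral_finset_sum _ fun j _ => htermInt i j k]
      simp only [hterm i _ k]
      rw [Finset.sum_ite_eq]
      simp
    simp only [this]
    rw [Finset.sum_const, Finset.card_univ, Fintype.card_fin, nsmul_eq_mul]
  -- nonnegativity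
  have hgint_nonneg : ∀ i, (0:ℝ) ≤ ∫ ω, g i ω ^ 2 ∂μ :=
    fun i => integral_nonneg fun ω => sq_nonneg _
  have hRHSi : ∀ i, ∫⁻ ω, ENNReal.ofReal ((deriv ρ (ε i ω)) ^ 2) ∂μ
      = ENNReal.ofReal (∫ ω, g i ω ^ 2 ∂μ) := fun i =>
    (ofReal_integral_eq_lintegral_ofReal (hgsqInt i)
      (Filter.Eventually.of_forall fun ω => sq_nonneg _)).symm
  calc ∫⁻ ω, ENNReal.ofReal (‖βhat ω‖ ^ 2) ∂μ
      ≤ ∫⁻ ω, ENNReal.ofReal ((1 / τ ^ 2)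
          * ‖Wn ρ (fun i => X i ω) (fun i => ε i ω)‖ ^ 2) ∂μ := by
        refine lintegral_mono fun ω => ENNReal.ofReal_le_ofReal ?_
        have h2 := pow_le_pow_left₀ (norm_nonneg _) (part1 ω) 2
        calc ‖βhat ω‖ ^ 2
            ≤ ((1 / τ) * ‖Wn ρ (fun i => X i ω) (fun i => ε i ω)‖) ^ 2 := h2
          _ = (1 / τ ^ 2) * ‖Wn ρ (fun i => X i ω) (fun i => ε i ω)‖ ^ 2 := by ring
    _ = ENNReal.ofReal ((1 / τ ^ 2)
          * ∫ ω, ‖Wn ρ (fun i => X i ω) (fun i => ε i ω)‖ ^ 2 ∂μ) := by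
        rw [← integral_const_mul]
        exact (ofReal_integral_eq_lintegral_ofReal (hWInt.const_mul _)
          (Filter.Eventually.of_forall fun ω => by positivity)).symm
    _ = ENNReal.ofReal ((1 / τ ^ 2) * ((p : ℝ) / (n : ℝ)) * (1 / (n : ℝ))
          * ∑ i, ∫ ω, g i ω ^ 2 ∂μ) := by
        rw [hWval]
        refine congrArg ENNReal.ofReal ?_
        have hn' : ((n:ℝ)) ≠ 0 := Nat.cast_ne_zero.mpr hn
        field_simp
    _ = ENNReal.ofReal ((1 / τ ^ 2) * ((p : ℝ) / (n : ℝ)) * (1 / (n : ℝ)))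
          * ∑ i, ∫⁻ ω, ENNReal.ofReal ((deriv ρ (ε i ω)) ^ 2) ∂μ := by
        rw [ENNReal.ofReal_mul (by positivity)]
        congr 1
        rw [ENNReal.ofReal_sum_of_nonneg (fun i _ => hgint_nonneg i)]
        exact Finset.sum_congr rfl fun i _ => (hRHSi i).symm
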